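/- Let 𝒞 be a weakly connected collection of cells over the field ℚ with |𝒞| ≤ 3 (rank 1, 2, or 3). Then the adjacent 2-minor ideal I_adj(𝒞) is a radical ideal. -/

import Mathlib

open MvPolynomial

/-- The vertex set of the cell with lower-left corner `a`. -/
def cellVerts (a : ℤ × ℤ) : Finset (ℤ × ℤ) :=
  {a, a + (1, 0), a + (0, 1), a + (1, 1)}

/-- The edges of the cell with lower-left corner `a`, recorded as ordered pairs
of their two endpoints: `{a,c}`, `{c,b}`, `{b,d}`, `{a,d}` where `b = a+(1,1)`,
`c = a+(0,1)`, `d = a+(1,0)`. -/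
def cellEdges (a : ℤ × ℤ) : Finset ((ℤ × ℤ) × (ℤ × ℤ)) :=
  {(a, a + (0, 1)), (a + (0, 1), a + (1, 1)), (a + (1, 1), a + (1, 0)), (a, a + (1, 0))}

/-- The vertex set of a collection of cells; cells are recorded by their
lower-left corners. -/
def verts (C : Finset (ℤ × ℤ)) : Finset (ℤ × ℤ) :=
  C.biUnion cellVerts

lemma mem_verts {C : Finset (ℤ × ℤ)} {a v : ℤ × ℤ} (ha : a ∈ C)
    (hv : v ∈ cellVerts a) : v ∈ verts C :=
  Finset.mem_biUnion.mpr ⟨a, ha, hv⟩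

lemma corner_mem00 (a : ℤ × ℤ) : a ∈ cellVerts a := by simp [cellVerts]
lemma corner_mem10 (a : ℤ × ℤ) : a + (1, 0) ∈ cellVerts a := by simp [cellVerts]
lemma corner_mem01 (a : ℤ × ℤ) : a + (0, 1) ∈ cellVerts a := by simp [cellVerts]
lemma corner_mem11 (a : ℤ × ℤ) : a + (1, 1) ∈ cellVerts a := by simp [cellVerts]

/-- The adjacent 2-minor ideal `I_adj(𝒞)` of a collection of cells, inside the
polynomial ring `S_𝒞 = K[x_v : v ∈ V(𝒞)]`. -/
noncomputable def adjIdeal (K : Type*) [Field K] (C : Finset (ℤ × ℤ)) :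
    Ideal (MvPolynomial {v // v ∈ verts C} K) :=
  Ideal.span {f | ∃ a, ∃ ha : a ∈ C,
    f = X ⟨a, mem_verts ha (corner_mem00 a)⟩ *
          X ⟨a + (1, 1), mem_verts ha (corner_mem11 a)⟩ -
        X ⟨a + (0, 1), mem_verts ha (corner_mem01 a)⟩ *
          X ⟨a + (1, 0), mem_verts ha (corner_mem10 a)⟩}

/-- The vector `v_C = e_a + e_b - e_c - e_d ∈ ℤ^{V(𝒞)}` attached to the cell
with lower-left corner `a` (so `b = a+(1,1)`, `c = a+(0,1)`, `d = a+(1,0)`). -/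
def cellVec (C : Finset (ℤ × ℤ)) (a : ℤ × ℤ) : {v // v ∈ verts C} → ℤ :=
  fun w => ((if w.1 = a then 1 else 0) + (if w.1 = a + (1, 1) then 1 else 0)
    - (if w.1 = a + (0, 1) then 1 else 0)) - (if w.1 = a + (1, 0) then 1 else 0)

/-- The lattice `Λ_𝒟 ⊆ ℤ^{V(𝒞)}` generated by the vectors `v_C`, `C ∈ 𝒟`,
for a subcollection `𝒟` of `𝒞`. -/
def cellLattice (C : Finset (ℤ × ℤ)) (D : Set (ℤ × ℤ)) :
    AddSubgroup ({v // v ∈ verts C} → ℤ) :=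
  AddSubgroup.closure {g | ∃ a ∈ D, g = cellVec C a}

/-- The lattice ideal `L_𝒟 ⊆ S_𝒞` of a subcollection `𝒟` of `𝒞`. -/
noncomputable def latticeIdeal (K : Type*) [Field K] (C : Finset (ℤ × ℤ))
    (D : Set (ℤ × ℤ)) : Ideal (MvPolynomial {v // v ∈ verts C} K) :=
  Ideal.span {f | ∃ e ∈ cellLattice C D,
    f = (∏ w, X w ^ (e w).toNat) - ∏ w, X w ^ (-(e w)).toNat}

/-- `W ⊆ V(𝒞)` is admissible: for each cell `C ∈ 𝒞`, either `W ∩ C = ∅` or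
`W ∩ C` contains an edge of `C`. -/
def Admissible (C : Finset (ℤ × ℤ)) (W : Set (ℤ × ℤ)) : Prop :=
  W ⊆ ↑(verts C) ∧ ∀ a ∈ C, (∀ v ∈ cellVerts a, v ∉ W) ∨
    ∃ e ∈ cellEdges a, e.1 ∈ W ∧ e.2 ∈ W

/-- The subcollection `𝒞_W` of cells of `𝒞` disjoint from `W`. -/
def subcollW (C : Finset (ℤ × ℤ)) (W : Set (ℤ × ℤ)) : Set (ℤ × ℤ) :=
  {a | a ∈ C ∧ ∀ v ∈ cellVerts a, v ∉ W}

/-- The ideal `P_W(𝒞) = (x_w : w ∈ W) + L_{𝒞_W}`. -/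
noncomputable def PW (K : Type*) [Field K] (C : Finset (ℤ × ℤ))
    (W : Set (ℤ × ℤ)) : Ideal (MvPolynomial {v // v ∈ verts C} K) :=
  Ideal.span {f | ∃ v : {v // v ∈ verts C}, v.1 ∈ W ∧ f = X v} +
    latticeIdeal K C (subcollW C W)

/-- The height of an ideal: the infimum of `Order.height 𝔭` over the prime
ideals `𝔭` containing it (equivalently, over its minimal primes); for a prime
ideal this is just its height. -/
noncomputable def idealHeight {R : Type*} [CommRing R] (I : Ideal R) : ℕ∞ :=
  ⨅ p ∈ {p : PrimeSpectrum R | I ≤ p.asIdeal}, Order.height p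

/-- A collection of cells is weakly connected if any two of its cells are
joined by a sequence of cells of the collection in which consecutive cells
share at least one vertex. -/
def WeaklyConnected (C : Finset (ℤ × ℤ)) : Prop :=
  ∀ a ∈ C, ∀ b ∈ C, Relation.ReflTransGen
    (fun p q => p ∈ C ∧ q ∈ C ∧ ((cellVerts p ∩ cellVerts q).Nonempty)) a b

/-- `𝒞` contains a square tetromino. -/
def HasSquareTetromino (C : Finset (ℤ × ℤ)) : Prop :=
  ∃ a : ℤ × ℤ, a ∈ C ∧ a + (1, 0) ∈ C ∧ a + (0, 1) ∈ C ∧ a + (1, 1) ∈ C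

/-- `𝒞` contains an X-pentomino. -/
def HasXPentomino (C : Finset (ℤ × ℤ)) : Prop :=
  ∃ a : ℤ × ℤ, a ∈ C ∧ a + (1, 0) ∈ C ∧ a - (1, 0) ∈ C ∧
    a + (0, 1) ∈ C ∧ a - (0, 1) ∈ C

/-- Row convexity of a collection of cells. -/
def RowConvex (C : Finset (ℤ × ℤ)) : Prop :=
  ∀ a ∈ C, ∀ b ∈ C, a.2 = b.2 → ∀ r : ℤ, a.1 ≤ r → r ≤ b.1 → (r, a.2) ∈ C

/-- Column convexity of a collection of cells. -/
def ColConvex (C : Finset (ℤ × ℤ)) : Prop :=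
  ∀ a ∈ C, ∀ b ∈ C, a.1 = b.1 → ∀ s : ℤ, a.2 ≤ s → s ≤ b.2 → (a.1, s) ∈ C


/- ============================================================
   Auxiliary development: a general "binomial rewriting"
   framework proving radicality of binomial ideals whose lead
   monomials are squarefree with pairwise disjoint supports and
   strictly decrease along an additive weight, plus the
   combinatorial construction of such data for collections of
   at most three cells.
   ============================================================ -/

set_option maxHeartbeats 1000000
set_option linter.unusedSectionVars false
set_option linter.unusedVariables false


noncomputable section
namespace BinRW

attribute [local instance] Classical.propDecidable

variable {σ ι : Type*}

structure Sys (σ ι : Type*) where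
  U : ι → (σ →₀ ℕ)
  V : ι → (σ →₀ ℕ)
  W : (σ →₀ ℕ) → ℕ
  W_add : ∀ d e, W (d + e) = W d + W e
  UV : ∀ i, W (V i) < W (U i)
  disj : ∀ i j, i ≠ j → ∀ x, U i x = 0 ∨ U j x = 0
  sqf : ∀ i x, U i x ≤ 1

variable (S : Sys σ ι)

lemma Sys.W_le_of_le {d e : σ →₀ ℕ} (h : d ≤ e) : S.W d ≤ S.W e := by
  have h1 : e - d + d = e := tsub_add_cancel_of_le h
  have := S.W_add (e - d) d
  rw [h1] at this
  omega

lemma Sys.rw_lt {d : σ →₀ ℕ} {i : ι} (h : S.U i ≤ d) :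
    S.W (d - S.U i + S.V i) < S.W d := by
  have h1 : d - S.U i + S.U i = d := tsub_add_cancel_of_le h
  have h2 := S.W_add (d - S.U i) (S.U i)
  have h3 := S.W_add (d - S.U i) (S.V i)
  have h4 := S.UV i
  rw [h1] at h2
  omega

/-- Normal form of an exponent vector. -/
def Sys.NF (S : Sys σ ι) (d : σ →₀ ℕ) : σ →₀ ℕ :=
  if h : ∃ i, S.U i ≤ d then
    S.NF (d - S.U h.choose + S.V h.choose)
  else d
termination_by S.W d
decreasing_by exact S.rw_lt h.choose_spec

lemma Sys.add_le {d : σ →₀ ℕ} {i j : ι} (hij : i ≠ j) (hi : S.U i ≤ d) (hj : S.U j ≤ d) :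
    S.U i + S.U j ≤ d := by
  intro x
  rcases S.disj i j hij x with h | h <;>
    simp only [Finsupp.add_apply, h, zero_add, add_zero] <;>
    [exact hj x; exact hi x]

/-- Key confluence lemma. -/
lemma Sys.NF_rw_aux : ∀ n : ℕ, ∀ d : σ →₀ ℕ, S.W d ≤ n → ∀ i : ι, S.U i ≤ d →
    S.NF (d - S.U i + S.V i) = S.NF d := by
  intro n
  induction n with
  | zero =>
    intro d hd i hi
    have h1 : S.W (S.U i) ≤ S.W d := S.W_le_of_le hi
    have := S.UV i
    omega
  | succ n IH =>
    intro d hd i hi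
    have hex : ∃ i, S.U i ≤ d := ⟨i, hi⟩
    conv_rhs => rw [Sys.NF, dif_pos hex]
    set j := hex.choose with hjdef
    have hj : S.U j ≤ d := hex.choose_spec
    by_cases hij : i = j
    · subst hij; rfl
    · have hsum : S.U i + S.U j ≤ d := S.add_le hij hi hj
      set r := d - (S.U i + S.U j) with hrdef
      have hr : r + (S.U i + S.U j) = d := tsub_add_cancel_of_le hsum
      have hdi : d - S.U i = S.U j + r := by
        have : S.U j + r + S.U i = d := by rw [← hr]; abel
        rw [← this, add_tsub_cancel_right]
      have hdj : d - S.U j = S.U i + r := by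
        have : S.U i + r + S.U j = d := by rw [← hr]; abel
        rw [← this, add_tsub_cancel_right]
      -- weights
      have hWd : S.W d = S.W (S.U i) + S.W (S.U j) + S.W r := by
        rw [← hr, S.W_add, S.W_add]; omega
      have hWi : S.W (S.U j + r + S.V i) ≤ n := by
        have := S.W_add (S.U j + r) (S.V i)
        have := S.W_add (S.U j) r
        have := S.UV i
        omega
      have hWj : S.W (S.U i + r + S.V j) ≤ n := by
        have := S.W_add (S.U i + r) (S.V j)
        have := S.W_add (S.U i) r
        have := S.UV j
        omega
      have e1 : S.NF (d - S.U i + S.V i) = S.NF (S.U j + r + S.V i) := by rw [hdi]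
      have e2 : S.NF (d - S.U j + S.V j) = S.NF (S.U i + r + S.V j) := by rw [hdj]
      have h3 : S.U j ≤ S.U j + r + S.V i := by
        calc S.U j ≤ S.U j + (r + S.V i) := le_add_of_nonneg_right zero_le
        _ = S.U j + r + S.V i := by abel
      have h4 : S.U i ≤ S.U i + r + S.V j := by
        calc S.U i ≤ S.U i + (r + S.V j) := le_add_of_nonneg_right zero_le
        _ = S.U i + r + S.V j := by abel
      have e3 := IH (S.U j + r + S.V i) hWi j h3
      have e4 := IH (S.U i + r + S.V j) hWj i h4
      have h5 : S.U j + r + S.V i - S.U j = r + S.V i := by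
        have : S.U j + r + S.V i = r + S.V i + S.U j := by abel
        rw [this, add_tsub_cancel_right]
      have h6 : S.U i + r + S.V j - S.U i = r + S.V j := by
        have : S.U i + r + S.V j = r + S.V j + S.U i := by abel
        rw [this, add_tsub_cancel_right]
      rw [e1, ← e3, h5, e2, ← e4, h6]
      congr 1
      abel

lemma Sys.NF_rw {d : σ →₀ ℕ} {i : ι} (hi : S.U i ≤ d) :
    S.NF (d - S.U i + S.V i) = S.NF d :=
  S.NF_rw_aux (S.W d) d le_rfl i hi

lemma Sys.NF_std_aux : ∀ n : ℕ, ∀ d : σ →₀ ℕ, S.W d ≤ n → ∀ i : ι, ¬ S.U i ≤ S.NF d := by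
  intro n
  induction n with
  | zero =>
    intro d hd i
    rw [Sys.NF]
    split_ifs with h
    · exfalso
      have h1 : S.W (S.U h.choose) ≤ S.W d := S.W_le_of_le h.choose_spec
      have := S.UV h.choose
      omega
    · intro hle
      exact h ⟨i, hle⟩
  | succ n IH =>
    intro d hd i
    rw [Sys.NF]
    split_ifs with h
    · have hlt := S.rw_lt h.choose_spec
      exact IH _ (by omega) i
    · intro hle
      exact h ⟨i, hle⟩

lemma Sys.NF_std (d : σ →₀ ℕ) (i : ι) : ¬ S.U i ≤ S.NF d :=
  S.NF_std_aux (S.W d) d le_rfl i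

lemma Sys.NF_fix {d : σ →₀ ℕ} (h : ∀ i, ¬ S.U i ≤ d) : S.NF d = d := by
  rw [Sys.NF, dif_neg]
  rintro ⟨i, hi⟩
  exact h i hi

lemma Sys.NF_W_aux : ∀ n : ℕ, ∀ d : σ →₀ ℕ, S.W d ≤ n →
    S.NF d = d ∨ S.W (S.NF d) < S.W d := by
  intro n
  induction n with
  | zero =>
    intro d hd
    rw [Sys.NF]
    split_ifs with h
    · exfalso
      have h1 : S.W (S.U h.choose) ≤ S.W d := S.W_le_of_le h.choose_spec
      have := S.UV h.choose
      omega
    · exact Or.inl rfl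
  | succ n IH =>
    intro d hd
    rw [Sys.NF]
    split_ifs with h
    · have hlt := S.rw_lt h.choose_spec
      rcases IH (d - S.U h.choose + S.V h.choose) (by omega) with h1 | h1
      · rw [h1]; exact Or.inr hlt
      · exact Or.inr (by omega)
    · exact Or.inl rfl

lemma Sys.NF_W (d : σ →₀ ℕ) : S.NF d = d ∨ S.W (S.NF d) < S.W d :=
  S.NF_W_aux (S.W d) d le_rfl


lemma Sys.NF_unfold (d : σ →₀ ℕ) : S.NF d =
    if h : ∃ i, S.U i ≤ d then S.NF (d - S.U h.choose + S.V h.choose) else d := by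
  conv_lhs => rw [Sys.NF]
/-- The binomial generators. -/
def Sys.gen (i : ι) : MvPolynomial σ ℚ :=
  monomial (S.U i) 1 - monomial (S.V i) 1

/-- The binomial ideal. -/
def Sys.idl : Ideal (MvPolynomial σ ℚ) := Ideal.span (Set.range S.gen)

lemma Sys.monomial_sub_gen_mem (m : σ →₀ ℕ) (c : ℚ) (i : ι) :
    monomial (m + S.U i) c - monomial (m + S.V i) c ∈ S.idl := by
  have : monomial (m + S.U i) c - monomial (m + S.V i) c
      = monomial m c * S.gen i := by
    rw [Sys.gen, mul_sub, monomial_mul, monomial_mul, mul_one]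
  rw [this]
  exact Ideal.mul_mem_left _ _ (Ideal.subset_span ⟨i, rfl⟩)

lemma Sys.monomial_sub_NF_mem_aux : ∀ n : ℕ, ∀ d : σ →₀ ℕ, S.W d ≤ n → ∀ c : ℚ,
    monomial d c - monomial (S.NF d) c ∈ S.idl := by
  intro n
  induction n with
  | zero =>
    intro d hd c
    rw [S.NF_unfold]
    split_ifs with h
    · exfalso
      have h1 : S.W (S.U h.choose) + S.W (d - S.U h.choose) = S.W d := by
        rw [← S.W_add, add_comm, tsub_add_cancel_of_le h.choose_spec]
      have := S.UV h.choose
      omega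
    · simp
  | succ n IH =>
    intro d hd c
    rw [S.NF_unfold]
    split_ifs with h
    · set j := h.choose with hj
      have hle : S.U j ≤ d := h.choose_spec
      have key : monomial d c - monomial (d - S.U j + S.V j) c ∈ S.idl := by
        have e1 : d - S.U j + S.U j = d := tsub_add_cancel_of_le hle
        have := S.monomial_sub_gen_mem (d - S.U j) c j
        rwa [e1] at this
      have hIH := IH (d - S.U j + S.V j) (by have := S.rw_lt hle; omega) c
      have := Ideal.add_mem _ key hIH
      simpa using this
    · simp

lemma Sys.monomial_sub_NF_mem (d : σ →₀ ℕ) (c : ℚ) :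
    monomial d c - monomial (S.NF d) c ∈ S.idl :=
  S.monomial_sub_NF_mem_aux (S.W d) d le_rfl c

/-- The normal form map on polynomials. -/
def Sys.N (p : MvPolynomial σ ℚ) : MvPolynomial σ ℚ :=
  AddMonoidAlgebra.mapDomain S.NF p

lemma Sys.N_add (p q : MvPolynomial σ ℚ) : S.N (p + q) = S.N p + S.N q :=
  AddMonoidAlgebra.mapDomain_add _ _ _

lemma Sys.N_zero : S.N 0 = 0 := AddMonoidAlgebra.mapDomain_zero _

lemma Sys.N_sub (p q : MvPolynomial σ ℚ) : S.N (p - q) = S.N p - S.N q := by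
  have h := S.N_add (p - q) q
  rw [sub_add_cancel] at h
  rw [h]; ring

lemma Sys.N_monomial (d : σ →₀ ℕ) (c : ℚ) : S.N (monomial d c) = monomial (S.NF d) c := by
  rw [Sys.N, ← single_eq_monomial, ← single_eq_monomial]
  exact AddMonoidAlgebra.mapDomain_single

lemma Sys.p_sub_N_mem (p : MvPolynomial σ ℚ) : p - S.N p ∈ S.idl := by
  induction p using MvPolynomial.induction_on' with
  | monomial d c =>
    rw [S.N_monomial]
    exact S.monomial_sub_NF_mem d c
  | add p q hp hq =>
    rw [S.N_add]
    have := Ideal.add_mem _ hp hq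
    have e : p + q - (S.N p + S.N q) = (p - S.N p) + (q - S.N q) := by ring
    rwa [e]

lemma Sys.N_mul_gen (q : MvPolynomial σ ℚ) (i : ι) : S.N (q * S.gen i) = 0 := by
  induction q using MvPolynomial.induction_on' with
  | monomial m c =>
    have e : monomial m c * S.gen i
        = monomial (m + S.U i) c - monomial (m + S.V i) c := by
      rw [Sys.gen, mul_sub, monomial_mul, monomial_mul, mul_one]
    rw [e, S.N_sub, S.N_monomial, S.N_monomial]
    have h1 : S.NF (m + S.U i) = S.NF (m + S.V i) := by
      have hle : S.U i ≤ m + S.U i := le_add_self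
      have := S.NF_rw hle
      rw [add_tsub_cancel_right] at this
      exact this.symm
    rw [h1, sub_self]
  | add p q hp hq =>
    rw [add_mul, S.N_add, hp, hq, add_zero]

lemma Sys.N_zero_of_mem {p : MvPolynomial σ ℚ} (hp : p ∈ S.idl) : S.N p = 0 := by
  have main : ∀ q : MvPolynomial σ ℚ, S.N (q * p) = 0 := by
    refine Submodule.span_induction (p := fun x _ => ∀ q, S.N (q * x) = 0)
      ?_ ?_ ?_ ?_ hp
    · rintro x ⟨i, rfl⟩ q
      exact S.N_mul_gen q i
    · intro q; rw [mul_zero]; exact S.N_zero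
    · intro x y _ _ hx hy q
      rw [mul_add, S.N_add, hx, hy, add_zero]
    · intro r x _ hx q
      rw [smul_eq_mul, ← mul_assoc]
      exact hx (q * r)
  simpa using main 1

section Order
variable [LinearOrder σ]

/-- The total monomial order key. -/
def Sys.κ (S : Sys σ ι) (d : σ →₀ ℕ) : Lex (ℕ × Lex (σ →₀ ℕ)) :=
  toLex (S.W d, toLex d)

lemma Sys.κ_inj {d e : σ →₀ ℕ} (h : S.κ d = S.κ e) : d = e := by
  have h2 : (S.W d, toLex d) = (S.W e, toLex e) := toLex.injective h
  have := congrArg Prod.snd h2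
  exact toLex.injective this

lemma Sys.κ_lt_iff {d e : σ →₀ ℕ} :
    S.κ d < S.κ e ↔ S.W d < S.W e ∨ (S.W d = S.W e ∧ toLex d < toLex e) :=
  Prod.Lex.lt_iff

lemma Sys.κ_add_right {d e : σ →₀ ℕ} (f : σ →₀ ℕ) (h : S.κ d < S.κ e) :
    S.κ (d + f) < S.κ (e + f) := by
  rw [Sys.κ_lt_iff] at h ⊢
  rcases h with h | ⟨h1, h2⟩
  · left; rw [S.W_add, S.W_add]; omega
  · right
    constructor
    · rw [S.W_add, S.W_add]; omega
    · have : toLex (f + d) < toLex (f + e) := by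
        have : (toLex f + toLex d : Lex (σ →₀ ℕ)) < toLex f + toLex e :=
          add_lt_add_right h2 (toLex f)
        exact this
      have e1 : d + f = f + d := add_comm _ _
      have e2 : e + f = f + e := add_comm _ _
      rw [e1, e2]
      exact this

lemma Sys.κ_add_le {d e : σ →₀ ℕ} (f : σ →₀ ℕ) (h : S.κ d ≤ S.κ e) :
    S.κ (d + f) ≤ S.κ (e + f) := by
  rcases lt_or_eq_of_le h with h | h
  · exact le_of_lt (S.κ_add_right f h)
  · rw [S.κ_inj h]

lemma Sys.κ_NF_le (d : σ →₀ ℕ) : S.κ (S.NF d) ≤ S.κ d := by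
  rcases S.NF_W d with h | h
  · rw [h]
  · apply le_of_lt
    rw [Sys.κ_lt_iff]
    exact Or.inl h

/-- Strict maximum monomial of a nonzero polynomial. -/
lemma Sys.exists_strict_max {p : MvPolynomial σ ℚ} (hp : p ≠ 0) :
    ∃ u, coeff u p ≠ 0 ∧ ∀ d ∈ p.support, d ≠ u → S.κ d < S.κ u := by
  have hne : p.support.Nonempty := by
    rw [Finset.nonempty_iff_ne_empty, Ne, MvPolynomial.support_eq_empty]
    exact hp
  obtain ⟨u, hu, hmax⟩ := Finset.exists_max_image p.support S.κ hne
  refine ⟨u, MvPolynomial.mem_support_iff.mp hu, fun d hd hne2 => ?_⟩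
  rcases lt_or_eq_of_le (hmax d hd) with h | h
  · exact h
  · exact absurd (S.κ_inj h) hne2

lemma Sys.mul_strict_max {p q : MvPolynomial σ ℚ} {u v : σ →₀ ℕ}
    (hpu : ∀ d ∈ p.support, d ≠ u → S.κ d < S.κ u)
    (hqv : ∀ d ∈ q.support, d ≠ v → S.κ d < S.κ v) :
    coeff (u + v) (p * q) = coeff u p * coeff v q ∧
      ∀ d ∈ (p * q).support, d ≠ u + v → S.κ d < S.κ (u + v) := by
  have hple : ∀ d ∈ p.support, S.κ d ≤ S.κ u := by
    intro d hd
    by_cases h : d = u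
    · rw [h]
    · exact le_of_lt (hpu d hd h)
  have hqle : ∀ d ∈ q.support, S.κ d ≤ S.κ v := by
    intro d hd
    by_cases h : d = v
    · rw [h]
    · exact le_of_lt (hqv d hd h)
  have key : ∀ d₁ d₂ : σ →₀ ℕ, d₁ ∈ p.support → d₂ ∈ q.support →
      (d₁, d₂) ≠ (u, v) → S.κ (d₁ + d₂) < S.κ (u + v) := by
    intro d₁ d₂ h1 h2 hne
    by_cases hd1 : d₁ = u
    · subst hd1
      have hd2 : d₂ ≠ v := fun h => hne (by rw [h])
      have := S.κ_add_right d₁ (hqv d₂ h2 hd2)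
      calc S.κ (d₁ + d₂) = S.κ (d₂ + d₁) := by rw [add_comm]
        _ < S.κ (v + d₁) := this
        _ = S.κ (d₁ + v) := by rw [add_comm]
    · calc S.κ (d₁ + d₂) < S.κ (u + d₂) := S.κ_add_right d₂ (hpu d₁ h1 hd1)
        _ = S.κ (d₂ + u) := by rw [add_comm]
        _ ≤ S.κ (v + u) := S.κ_add_le u (hqle d₂ h2)
        _ = S.κ (u + v) := by rw [add_comm]
  constructor
  · rw [MvPolynomial.coeff_mul]
    rw [Finset.sum_eq_single (u, v)]
    · rintro ⟨d₁, d₂⟩ hmem hne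
      rw [Finset.HasAntidiagonal.mem_antidiagonal] at hmem
      by_contra hc
      have h1 : coeff d₁ p ≠ 0 := fun h => hc (by simp [h])
      have h2 : coeff d₂ q ≠ 0 := fun h => hc (by simp [h])
      have := key d₁ d₂ (MvPolynomial.mem_support_iff.mpr h1)
        (MvPolynomial.mem_support_iff.mpr h2) hne
      rw [hmem] at this
      exact lt_irrefl _ this
    · intro h
      exact absurd (by simp) h
  · intro d hd hne
    obtain ⟨d₁, h1, d₂, h2, hsum⟩ := Finset.mem_add.mp (MvPolynomial.support_mul p q hd)
    have : (d₁, d₂) ≠ (u, v) := by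
      rintro ⟨⟩
      exact hne hsum.symm
    have := key d₁ d₂ h1 h2 this
    rwa [hsum] at this

lemma Sys.pow_strict_max {p : MvPolynomial σ ℚ} {u : σ →₀ ℕ}
    (hmax : ∀ d ∈ p.support, d ≠ u → S.κ d < S.κ u) (hc : coeff u p ≠ 0) :
    ∀ n : ℕ, coeff (n • u) (p ^ n) = (coeff u p) ^ n ∧
      ∀ d ∈ (p ^ n).support, d ≠ n • u → S.κ d < S.κ (n • u) := by
  intro n
  induction n with
  | zero =>
    constructor
    · simp [MvPolynomial.coeff_one]
    · intro d hd hne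
      exfalso
      apply hne
      have : d ∈ (1 : MvPolynomial σ ℚ).support := by simpa using hd
      have h1 : d = 0 := by
        by_contra h
        have := MvPolynomial.mem_support_iff.mp this
        rw [MvPolynomial.coeff_one, if_neg (by exact fun hh => h hh.symm)] at this
        exact this rfl
      simp [h1]
  | succ n IH =>
    have hpn : coeff (n • u) (p ^ n) ≠ 0 := by
      rw [IH.1]; exact pow_ne_zero _ hc
    have := S.mul_strict_max IH.2 hmax
    have e : (n + 1) • u = n • u + u := by rw [succ_nsmul]
    rw [pow_succ, e]
    refine ⟨?_, this.2⟩
    rw [this.1, IH.1, pow_succ]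

end Order

/-- Standard exponents are closed under scaling. -/
lemma Sys.std_nsmul {u : σ →₀ ℕ} (hu : ∀ i, ¬ S.U i ≤ u) (n : ℕ) (i : ι) :
    ¬ S.U i ≤ n • u := by
  intro h
  rcases Nat.eq_zero_or_pos n with hn | hn
  · subst hn
    have h0 : S.U i = 0 := by
      rw [zero_smul] at h
      exact le_antisymm h zero_le
    have := S.UV i
    rw [h0] at this
    have hW0 : S.W (0 : σ →₀ ℕ) = 0 := by
      have := S.W_add 0 0
      simp at this
      omega
    omega
  · apply hu i
    intro x
    have hx := h x
    have hs := S.sqf i x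
    have : (n • u) x = n * u x := by simp
    rw [this] at hx
    rcases Nat.lt_or_ge (u x) 1 with h1 | h1
    · interval_cases h2 : u x
      · simp at hx ⊢; omega
    · omega

section Main
variable [LinearOrder σ]

lemma Sys.coeff_N (p : MvPolynomial σ ℚ) (b : σ →₀ ℕ) :
    coeff b (S.N p) = ∑ d ∈ p.support, if S.NF d = b then coeff d p else 0 := by
  show Finsupp.mapDomain S.NF (AddMonoidAlgebra.coeff p) b = _
  rw [Finsupp.mapDomain, Finsupp.sum_apply, Finsupp.sum]
  exact Finset.sum_congr rfl fun a _ => Finsupp.single_apply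

theorem Sys.radical_idl : S.idl.radical = S.idl := by
  refine le_antisymm ?_ Ideal.le_radical
  intro f hf
  rw [Ideal.mem_radical_iff] at hf
  obtain ⟨n, hn⟩ := hf
  set g := S.N f with hg
  have hfg : f - g ∈ S.idl := S.p_sub_N_mem f
  by_cases hg0 : g = 0
  · have : f - g = f := by rw [hg0, sub_zero]
    rwa [this] at hfg
  · exfalso
    -- g ^ n ∈ idl
    have hgn : g ^ n ∈ S.idl := by
      have h1 : Ideal.Quotient.mk S.idl g = Ideal.Quotient.mk S.idl f :=
        (Ideal.Quotient.eq).mpr (by have := S.idl.neg_mem hfg; simpa using this)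
      have h2 : Ideal.Quotient.mk S.idl (g ^ n) = 0 := by
        rw [map_pow, h1, ← map_pow, Ideal.Quotient.eq_zero_iff_mem]
        exact hn
      exact (Ideal.Quotient.eq_zero_iff_mem).mp h2
    have hNgn : S.N (g ^ n) = 0 := S.N_zero_of_mem hgn
    -- strict max of g
    obtain ⟨u, hcu, humax⟩ := S.exists_strict_max hg0
    -- u is standard
    have hustd : ∀ i, ¬ S.U i ≤ u := by
      have hu : u ∈ g.support := MvPolynomial.mem_support_iff.mpr hcu
      have : g.support ⊆ f.support.image S.NF := by
        rw [hg]
        exact Finsupp.mapDomain_support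
      obtain ⟨d, _, hd⟩ := Finset.mem_image.mp (this hu)
      intro i
      rw [← hd]
      exact S.NF_std d i
    have hnustd := S.std_nsmul hustd n
    -- coeff of N (g^n) at n • u
    obtain ⟨hcoeff, hbound⟩ := S.pow_strict_max humax hcu n
    have hke : coeff (n • u) (S.N (g ^ n)) = coeff (n • u) (g ^ n) := by
      rw [S.coeff_N]
      rw [Finset.sum_eq_single (n • u)]
      · rw [if_pos (S.NF_fix hnustd)]
      · intro d hd hne
        rw [if_neg]
        intro hNFd
        apply hne
        have h1 : S.κ d < S.κ (n • u) := hbound d hd hne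
        have h2 : S.κ (S.NF d) ≤ S.κ d := S.κ_NF_le d
        rw [hNFd] at h2
        exact absurd (lt_of_le_of_lt h2 h1) (lt_irrefl _)
      · intro h
        rw [if_pos (S.NF_fix hnustd)]
        exact MvPolynomial.notMem_support_iff.mp h
    rw [hNgn] at hke
    simp only [MvPolynomial.coeff_zero] at hke
    rw [hcoeff] at hke
    exact pow_ne_zero n hcu hke.symm

end Main

end BinRW

end

def LPair (o : ℤ × ℤ → Bool) (a : ℤ × ℤ) : (ℤ × ℤ) × (ℤ × ℤ) :=
  if o a then (a, a + (1, 1)) else (a + (0, 1), a + (1, 0))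

def GoodOri (C : Finset (ℤ × ℤ)) (o : ℤ × ℤ → Bool) : Prop :=
  ∀ a ∈ C, ∀ b ∈ C, a ≠ b →
    (LPair o a).1 ≠ (LPair o b).1 ∧ (LPair o a).1 ≠ (LPair o b).2 ∧
    (LPair o a).2 ≠ (LPair o b).1 ∧ (LPair o a).2 ≠ (LPair o b).2

private lemma conv2 (a b : ℤ × ℤ) (h : a + (0, 1) = b + (1, 1)) : a = b + (1, 0) := by
  obtain ⟨a1, a2⟩ := a; obtain ⟨b1, b2⟩ := b
  simp only [Prod.mk_add_mk, Prod.mk.injEq] at h ⊢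
  omega

private lemma conv4 (a b : ℤ × ℤ) (h : a + (1, 0) = b + (1, 1)) : a = b + (0, 1) := by
  obtain ⟨a1, a2⟩ := a; obtain ⟨b1, b2⟩ := b
  simp only [Prod.mk_add_mk, Prod.mk.injEq] at h ⊢
  omega

private lemma conv5 (a b : ℤ × ℤ) (h : a + (0, 1) = b + (1, 0)) : a = b + (1, -1) := by
  obtain ⟨a1, a2⟩ := a; obtain ⟨b1, b2⟩ := b
  simp only [Prod.mk_add_mk, Prod.mk.injEq] at h ⊢
  omega

lemma mixed_contra (p q r s t f : ℤ × ℤ) (hq : q = p + (1, 1)) (hs : s = r + (1, -1))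
    (hrmem : r = p ∨ r = q ∨ r = t) (hsmem : s = p ∨ s = q ∨ s = t)
    (hf : f = p ∨ f = q) (htp : t ≠ p) (htq : t ≠ q)
    (hedge : t = f + (0, 1) ∨ t = f + (1, 0) ∨ f = t + (0, 1) ∨ f = t + (1, 0)) :
    False := by
  obtain ⟨p1, p2⟩ := p
  obtain ⟨q1, q2⟩ := q
  obtain ⟨r1, r2⟩ := r
  obtain ⟨s1, s2⟩ := s
  obtain ⟨t1, t2⟩ := t
  obtain ⟨f1, f2⟩ := f
  simp only [Prod.mk_add_mk, Prod.mk.injEq, Ne, not_and] at *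
  omega

lemma exists_goodOri (C : Finset (ℤ × ℤ)) (hcard : C.card ≤ 3) :
    ∃ o : ℤ × ℤ → Bool, GoodOri C o := by
  by_cases hD : ∃ p ∈ C, ∃ q ∈ C, q = p + (1, 1)
  · by_cases hA : ∃ r ∈ C, ∃ s ∈ C, s = r + (1, -1)
    · obtain ⟨p, hp, q, hq, hpq⟩ := hD
      obtain ⟨r, hr, s, hs, hrs⟩ := hA
      have hpq' : p ≠ q := by
        intro h
        rw [← h] at hpq
        obtain ⟨p1, p2⟩ := p
        simp only [Prod.mk_add_mk, Prod.mk.injEq] at hpq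
        omega
      refine ⟨fun x => !decide (x = p ∨ x = q), ?_⟩
      intro a ha b hb hab
      by_cases hao : a = p ∨ a = q <;> by_cases hbo : b = p ∨ b = q
      · -- both in {p,q}
        have h1 : (!decide (a = p ∨ a = q)) = false := by simp [hao]
        have h2 : (!decide (b = p ∨ b = q)) = false := by simp [hbo]
        simp only [LPair, h1, h2, Bool.false_eq_true, if_false]
        subst hpq
        rcases hao with rfl | rfl <;> rcases hbo with rfl | rfl
        · exact absurd rfl hab
        · obtain ⟨p1, p2⟩ := a
          refine ⟨?_, ?_, ?_, ?_⟩ <;>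
            (simp only [Prod.mk_add_mk, Ne, Prod.mk.injEq, not_and]; omega)
        · obtain ⟨p1, p2⟩ := b
          refine ⟨?_, ?_, ?_, ?_⟩ <;>
            (simp only [Prod.mk_add_mk, Ne, Prod.mk.injEq, not_and]; omega)
        · exact absurd rfl hab
      · -- a in {p,q}, b outside
        push_neg at hbo
        have h1 : (!decide (a = p ∨ a = q)) = false := by simp [hao]
        have h2 : (!decide (b = p ∨ b = q)) = true := by
          simp only [Bool.not_eq_true', decide_eq_false_iff_not]
          exact fun h => h.elim hbo.1 hbo.2
        simp only [LPair, h1, h2, Bool.false_eq_true, if_false, if_true]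
        have hC : C = {p, q, b} := by
          refine (Finset.eq_of_subset_of_card_le ?_ ?_).symm
          · intro x hx
            simp only [Finset.mem_insert, Finset.mem_singleton] at hx
            rcases hx with rfl | rfl | rfl <;> assumption
          · have h3 : ({p, q, b} : Finset (ℤ × ℤ)).card = 3 :=
              Finset.card_eq_three.mpr ⟨p, q, b, hpq',
                fun h => hbo.1 h.symm, fun h => hbo.2 h.symm, rfl⟩
            omega
        have hrmem : r = p ∨ r = q ∨ r = b := by
          have := hr; rw [hC] at this; simpa using this
        have hsmem : s = p ∨ s = q ∨ s = b := by
          have := hs; rw [hC] at this; simpa using this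
        have key : (b = a + (0, 1) ∨ b = a + (1, 0) ∨ a = b + (0, 1) ∨ a = b + (1, 0)) →
            False :=
          fun h => mixed_contra p q r s b a hpq hrs hrmem hsmem hao hbo.1 hbo.2 h
        exact ⟨fun h => key (Or.inl h.symm),
          fun h => key (Or.inr (Or.inr (Or.inr (conv2 a b h)))),
          fun h => key (Or.inr (Or.inl h.symm)),
          fun h => key (Or.inr (Or.inr (Or.inl (conv4 a b h))))⟩
      · -- b in {p,q}, a outside
        push_neg at hao
        have h1 : (!decide (a = p ∨ a = q)) = true := by
          simp only [Bool.not_eq_true', decide_eq_false_iff_not]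
          exact fun h => h.elim hao.1 hao.2
        have h2 : (!decide (b = p ∨ b = q)) = false := by simp [hbo]
        simp only [LPair, h1, h2, Bool.false_eq_true, if_false, if_true]
        have hC : C = {p, q, a} := by
          refine (Finset.eq_of_subset_of_card_le ?_ ?_).symm
          · intro x hx
            simp only [Finset.mem_insert, Finset.mem_singleton] at hx
            rcases hx with rfl | rfl | rfl <;> assumption
          · have h3 : ({p, q, a} : Finset (ℤ × ℤ)).card = 3 :=
              Finset.card_eq_three.mpr ⟨p, q, a, hpq',
                fun h => hao.1 h.symm, fun h => hao.2 h.symm, rfl⟩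
            omega
        have hrmem : r = p ∨ r = q ∨ r = a := by
          have := hr; rw [hC] at this; simpa using this
        have hsmem : s = p ∨ s = q ∨ s = a := by
          have := hs; rw [hC] at this; simpa using this
        have key : (a = b + (0, 1) ∨ a = b + (1, 0) ∨ b = a + (0, 1) ∨ b = a + (1, 0)) →
            False :=
          fun h => mixed_contra p q r s a b hpq hrs hrmem hsmem hbo hao.1 hao.2 h
        exact ⟨fun h => key (Or.inl h),
          fun h => key (Or.inr (Or.inl h)),
          fun h => key (Or.inr (Or.inr (Or.inr (conv2 b a h.symm)))),
          fun h => key (Or.inr (Or.inr (Or.inl (conv4 b a h.symm))))⟩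
      · -- both outside
        exfalso
        push_neg at hao hbo
        have hsub : ({p, q, a, b} : Finset (ℤ × ℤ)) ⊆ C := by
          intro x hx
          simp only [Finset.mem_insert, Finset.mem_singleton] at hx
          rcases hx with rfl | rfl | rfl | rfl <;> assumption
        have h3 : ({q, a, b} : Finset (ℤ × ℤ)).card = 3 :=
          Finset.card_eq_three.mpr ⟨q, a, b,
            fun h => hao.2 h.symm, fun h => hbo.2 h.symm, hab, rfl⟩
        have hnp : p ∉ ({q, a, b} : Finset (ℤ × ℤ)) := by
          simp only [Finset.mem_insert, Finset.mem_singleton]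
          rintro (rfl | rfl | rfl)
          · exact hpq' rfl
          · exact hao.1 rfl
          · exact hbo.1 rfl
        have h4 : ({p, q, a, b} : Finset (ℤ × ℤ)).card = 4 := by
          rw [Finset.card_insert_of_notMem hnp, h3]
        have := Finset.card_le_card hsub
        omega
    · push_neg at hA
      refine ⟨fun _ => false, ?_⟩
      intro a ha b hb hab
      simp only [LPair, Bool.false_eq_true, if_false]
      refine ⟨?_, ?_, ?_, ?_⟩
      · exact fun h => hab (add_right_cancel h)
      · exact fun h => hA b hb a ha (conv5 a b h)
      · exact fun h => hA a ha b hb (conv5 b a h.symm)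
      · exact fun h => hab (add_right_cancel h)
  · push_neg at hD
    refine ⟨fun _ => true, ?_⟩
    intro a ha b hb hab
    simp only [LPair, if_true]
    refine ⟨hab, ?_, ?_, ?_⟩
    · exact hD b hb a ha
    · exact fun h => hD a ha b hb h.symm
    · exact fun h => hab (add_right_cancel h)

-- ====== concrete instantiation ======
namespace CellInst

noncomputable section

variable (C : Finset (ℤ × ℤ)) (o : ℤ × ℤ → Bool)

def vLO : LinearOrder {v // v ∈ verts C} :=
  LinearOrder.lift' (fun v => (toLex v.1 : Lex (ℤ × ℤ)))
    (fun a b h => Subtype.ext (toLex.injective h))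

def vert00 (i : {a // a ∈ C}) : {v // v ∈ verts C} :=
  ⟨i.1, mem_verts i.2 (corner_mem00 i.1)⟩
def vert11 (i : {a // a ∈ C}) : {v // v ∈ verts C} :=
  ⟨i.1 + (1, 1), mem_verts i.2 (corner_mem11 i.1)⟩
def vert01 (i : {a // a ∈ C}) : {v // v ∈ verts C} :=
  ⟨i.1 + (0, 1), mem_verts i.2 (corner_mem01 i.1)⟩
def vert10 (i : {a // a ∈ C}) : {v // v ∈ verts C} :=
  ⟨i.1 + (1, 0), mem_verts i.2 (corner_mem10 i.1)⟩

def P1 (i : {a // a ∈ C}) : {v // v ∈ verts C} :=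
  if o i.1 then vert00 C i else vert01 C i
def P2 (i : {a // a ∈ C}) : {v // v ∈ verts C} :=
  if o i.1 then vert11 C i else vert10 C i
def Q1 (i : {a // a ∈ C}) : {v // v ∈ verts C} :=
  if o i.1 then vert01 C i else vert00 C i
def Q2 (i : {a // a ∈ C}) : {v // v ∈ verts C} :=
  if o i.1 then vert10 C i else vert11 C i

def Uc (i : {a // a ∈ C}) : {v // v ∈ verts C} →₀ ℕ :=
  Finsupp.single (P1 C o i) 1 + Finsupp.single (P2 C o i) 1
def Vc (i : {a // a ∈ C}) : {v // v ∈ verts C} →₀ ℕ :=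
  Finsupp.single (Q1 C o i) 1 + Finsupp.single (Q2 C o i) 1

def wz (v : ℤ × ℤ) : ℤ :=
  3 + ∑ a ∈ C, (if o a then 1 else -1) * (if a.1 < v.1 ∧ a.2 < v.2 then 1 else 0)

lemma wz_nonneg (hcard : C.card ≤ 3) (v : ℤ × ℤ) : 0 ≤ wz C o v := by
  have h1 : ∀ a ∈ C, (-1 : ℤ) ≤ (if o a then 1 else -1) * (if a.1 < v.1 ∧ a.2 < v.2 then 1 else 0) := by
    intro a _
    split_ifs <;> omega
  have h2 : ∑ a ∈ C, (-1 : ℤ) ≤ ∑ a ∈ C, (if o a then 1 else -1) * (if a.1 < v.1 ∧ a.2 < v.2 then 1 else 0) :=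
    Finset.sum_le_sum h1
  rw [Finset.sum_const] at h2
  simp only [nsmul_eq_mul, mul_neg, mul_one] at h2
  rw [wz]
  have : (C.card : ℤ) ≤ 3 := by exact_mod_cast hcard
  omega

def Wz (d : {v // v ∈ verts C} →₀ ℕ) : ℤ :=
  d.sum fun x n => (n : ℤ) * wz C o x.1

lemma Wz_add (d e : {v // v ∈ verts C} →₀ ℕ) :
    Wz C o (d + e) = Wz C o d + Wz C o e :=
  Finsupp.sum_add_index' (fun a => by simp) (fun a b₁ b₂ => by push_cast; ring)

lemma Wz_nonneg (hcard : C.card ≤ 3) (d : {v // v ∈ verts C} →₀ ℕ) :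
    0 ≤ Wz C o d :=
  Finset.sum_nonneg fun x _ =>
    mul_nonneg (by positivity) (wz_nonneg C o hcard x.1)

lemma Wz_single (x : {v // v ∈ verts C}) :
    Wz C o (Finsupp.single x 1) = wz C o x.1 := by
  rw [Wz, Finsupp.sum_single_index] <;> simp

/-- The key combinatorial identity for the weight. -/
lemma wz_cell {a : ℤ × ℤ} (ha : a ∈ C) :
    wz C o a + wz C o (a + (1, 1)) =
      wz C o (a + (0, 1)) + wz C o (a + (1, 0)) + (if o a then 1 else -1) := by
  obtain ⟨a1, a2⟩ := a
  have main : ∀ x ∈ C,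
      ((if o x then (1:ℤ) else -1) * (if x.1 < (a1, a2).1 ∧ x.2 < (a1, a2).2 then (1:ℤ) else 0)
      + (if o x then (1:ℤ) else -1) * (if x.1 < ((a1, a2) + (1, 1)).1 ∧ x.2 < ((a1, a2) + (1, 1)).2 then (1:ℤ) else 0))
      - (if o x then (1:ℤ) else -1) * (if x.1 < ((a1, a2) + (0, 1)).1 ∧ x.2 < ((a1, a2) + (0, 1)).2 then (1:ℤ) else 0)
      - (if o x then (1:ℤ) else -1) * (if x.1 < ((a1, a2) + (1, 0)).1 ∧ x.2 < ((a1, a2) + (1, 0)).2 then (1:ℤ) else 0)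
      = if x = (a1, a2) then (if o x then (1:ℤ) else -1) else 0 := by
    intro x _
    obtain ⟨x1, x2⟩ := x
    simp only [Prod.mk_add_mk, Prod.mk.injEq]
    set t : ℤ := if o (x1, x2) then (1:ℤ) else -1 with ht
    have hcomb : (if x1 < a1 ∧ x2 < a2 then (1:ℤ) else 0)
        + (if x1 < a1 + 1 ∧ x2 < a2 + 1 then (1:ℤ) else 0)
        - (if x1 < a1 + 0 ∧ x2 < a2 + 1 then (1:ℤ) else 0)
        - (if x1 < a1 + 1 ∧ x2 < a2 + 0 then (1:ℤ) else 0)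
        = if x1 = a1 ∧ x2 = a2 then 1 else 0 := by
      split_ifs <;> omega
    calc t * (if x1 < a1 ∧ x2 < a2 then (1:ℤ) else 0)
        + t * (if x1 < a1 + 1 ∧ x2 < a2 + 1 then (1:ℤ) else 0)
        - t * (if x1 < a1 + 0 ∧ x2 < a2 + 1 then (1:ℤ) else 0)
        - t * (if x1 < a1 + 1 ∧ x2 < a2 + 0 then (1:ℤ) else 0)
        = t * ((if x1 < a1 ∧ x2 < a2 then (1:ℤ) else 0)
        + (if x1 < a1 + 1 ∧ x2 < a2 + 1 then (1:ℤ) else 0)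
        - (if x1 < a1 + 0 ∧ x2 < a2 + 1 then (1:ℤ) else 0)
        - (if x1 < a1 + 1 ∧ x2 < a2 + 0 then (1:ℤ) else 0)) := by ring
      _ = t * (if x1 = a1 ∧ x2 = a2 then 1 else 0) := by rw [hcomb]
      _ = if x1 = a1 ∧ x2 = a2 then t else 0 := by split_ifs <;> ring
  have hS : (∑ x ∈ C, (if o x then (1:ℤ) else -1) * (if x.1 < (a1, a2).1 ∧ x.2 < (a1, a2).2 then (1:ℤ) else 0))
      + (∑ x ∈ C, (if o x then (1:ℤ) else -1) * (if x.1 < ((a1, a2) + (1, 1)).1 ∧ x.2 < ((a1, a2) + (1, 1)).2 then (1:ℤ) else 0))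
      - (∑ x ∈ C, (if o x then (1:ℤ) else -1) * (if x.1 < ((a1, a2) + (0, 1)).1 ∧ x.2 < ((a1, a2) + (0, 1)).2 then (1:ℤ) else 0))
      - (∑ x ∈ C, (if o x then (1:ℤ) else -1) * (if x.1 < ((a1, a2) + (1, 0)).1 ∧ x.2 < ((a1, a2) + (1, 0)).2 then (1:ℤ) else 0))
      = (if o (a1, a2) then (1:ℤ) else -1) := by
    rw [← Finset.sum_add_distrib, ← Finset.sum_sub_distrib, ← Finset.sum_sub_distrib,
      Finset.sum_congr rfl main, Finset.sum_ite_eq' C (a1, a2)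
      (fun x => if o x then (1:ℤ) else -1), if_pos ha]
  simp only [wz]
  linarith [hS]

lemma Wz_UV (i : {a // a ∈ C}) :
    Wz C o (Vc C o i) + 1 = Wz C o (Uc C o i) := by
  have hcell := wz_cell C o i.2
  rw [Uc, Vc, Wz_add, Wz_add, Wz_single, Wz_single, Wz_single, Wz_single]
  by_cases h : o i.1
  · simp only [P1, P2, Q1, Q2, if_pos h]
    simp only [vert00, vert11, vert01, vert10]
    rw [if_pos h] at hcell
    omega
  · simp only [P1, P2, Q1, Q2, if_neg h]
    simp only [vert00, vert11, vert01, vert10]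
    rw [if_neg h] at hcell
    omega

lemma P1_val (i : {a // a ∈ C}) : (P1 C o i).1 = (LPair o i.1).1 := by
  by_cases h : o i.1 <;> simp [P1, LPair, h, vert00, vert01]

lemma P2_val (i : {a // a ∈ C}) : (P2 C o i).1 = (LPair o i.1).2 := by
  by_cases h : o i.1 <;> simp [P2, LPair, h, vert11, vert10]

lemma pne1 (v : ℤ × ℤ) : v ≠ v + (1, 1) := by
  obtain ⟨a, b⟩ := v
  intro h
  rw [Prod.mk_add_mk, Prod.mk.injEq] at h
  omega

lemma pne2 (v : ℤ × ℤ) : v + (0, 1) ≠ v + (1, 0) := by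
  obtain ⟨a, b⟩ := v
  intro h
  rw [Prod.mk_add_mk, Prod.mk_add_mk, Prod.mk.injEq] at h
  omega

lemma P1_ne_P2 (i : {a // a ∈ C}) : P1 C o i ≠ P2 C o i := by
  intro h
  by_cases ho : o i.1
  · rw [P1, P2, if_pos ho, if_pos ho] at h
    exact pne1 i.1 (congrArg Subtype.val h)
  · rw [P1, P2, if_neg ho, if_neg ho] at h
    exact pne2 i.1 (congrArg Subtype.val h)

/-- The concrete rewriting system. -/
def mkSys (hcard : C.card ≤ 3) (hgood : GoodOri C o) :
    BinRW.Sys {v // v ∈ verts C} {a // a ∈ C} where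
  U := Uc C o
  V := Vc C o
  W d := (Wz C o d).toNat
  W_add d e := by
    have h1 := Wz_nonneg C o hcard d
    have h2 := Wz_nonneg C o hcard e
    have h3 := Wz_add C o d e
    omega
  UV i := by
    have h1 := Wz_nonneg C o hcard (Vc C o i)
    have h2 := Wz_UV C o i
    omega
  disj i j hij x := by
    have hij' : (i : ℤ × ℤ) ≠ (j : ℤ × ℤ) := fun h => hij (Subtype.ext h)
    obtain ⟨g1, g2, g3, g4⟩ := hgood i.1 i.2 j.1 j.2 hij'
    by_cases hx : x = P1 C o i ∨ x = P2 C o i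
    · right
      have hx1 : x ≠ P1 C o j := by
        intro h
        have := congrArg Subtype.val h
        rcases hx with rfl | rfl
        · rw [P1_val, P1_val] at this; exact g1 this
        · rw [P2_val, P1_val] at this; exact g3 this
      have hx2 : x ≠ P2 C o j := by
        intro h
        have := congrArg Subtype.val h
        rcases hx with rfl | rfl
        · rw [P1_val, P2_val] at this; exact g2 this
        · rw [P2_val, P2_val] at this; exact g4 this
      rw [Uc]
      rw [Finsupp.add_apply, Finsupp.single_apply, Finsupp.single_apply,
        if_neg (fun h => hx1 h.symm), if_neg (fun h => hx2 h.symm)]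
      rfl
    · left
      push_neg at hx
      rw [Uc]
      rw [Finsupp.add_apply, Finsupp.single_apply, Finsupp.single_apply,
        if_neg (fun h => hx.1 h.symm), if_neg (fun h => hx.2 h.symm)]
      rfl
  sqf i x := by
    rw [Uc, Finsupp.add_apply, Finsupp.single_apply, Finsupp.single_apply]
    have := P1_ne_P2 C o i
    split_ifs with h1 h2
    · exact absurd (h1.trans h2.symm) this
    · omega
    · omega
    · omega

lemma X_mul_X (v w : {v' // v' ∈ verts C}) :
    (X v : MvPolynomial {v' // v' ∈ verts C} ℚ) * X w
      = monomial (Finsupp.single v 1 + Finsupp.single w 1) 1 := by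
  rw [X, X, monomial_mul, one_mul]

lemma adj_eq_idl (hcard : C.card ≤ 3) (hgood : GoodOri C o) :
    adjIdeal ℚ C = (mkSys C o hcard hgood).idl := by
  apply le_antisymm
  · rw [adjIdeal, Ideal.span_le]
    rintro f ⟨a, ha, rfl⟩
    set i : {a' // a' ∈ C} := ⟨a, ha⟩ with hi
    rw [X_mul_X, X_mul_X]
    by_cases h : o a
    · have hU : Uc C o i = Finsupp.single (vert00 C i) 1 + Finsupp.single (vert11 C i) 1 := by
        rw [Uc, P1, P2, if_pos h, if_pos h]
      have hV : Vc C o i = Finsupp.single (vert01 C i) 1 + Finsupp.single (vert10 C i) 1 := by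
        rw [Vc, Q1, Q2, if_pos h, if_pos h]
      have : (monomial (Finsupp.single (⟨a, mem_verts ha (corner_mem00 a)⟩ : {v // v ∈ verts C}) 1 + Finsupp.single ⟨a + (1,1), mem_verts ha (corner_mem11 a)⟩ 1) (1:ℚ))
          - monomial (Finsupp.single (⟨a + (0,1), mem_verts ha (corner_mem01 a)⟩ : {v // v ∈ verts C}) 1 + Finsupp.single ⟨a + (1,0), mem_verts ha (corner_mem10 a)⟩ 1) (1:ℚ)
          = (mkSys C o hcard hgood).gen i := by
        rw [BinRW.Sys.gen]
        show _ = monomial (Uc C o i) 1 - monomial (Vc C o i) 1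
        rw [hU, hV]
        rfl
      rw [this]
      exact Ideal.subset_span ⟨i, rfl⟩
    · have hU : Uc C o i = Finsupp.single (vert01 C i) 1 + Finsupp.single (vert10 C i) 1 := by
        rw [Uc, P1, P2, if_neg h, if_neg h]
      have hV : Vc C o i = Finsupp.single (vert00 C i) 1 + Finsupp.single (vert11 C i) 1 := by
        rw [Vc, Q1, Q2, if_neg h, if_neg h]
      have : (monomial (Finsupp.single (⟨a, mem_verts ha (corner_mem00 a)⟩ : {v // v ∈ verts C}) 1 + Finsupp.single ⟨a + (1,1), mem_verts ha (corner_mem11 a)⟩ 1) (1:ℚ))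
          - monomial (Finsupp.single (⟨a + (0,1), mem_verts ha (corner_mem01 a)⟩ : {v // v ∈ verts C}) 1 + Finsupp.single ⟨a + (1,0), mem_verts ha (corner_mem10 a)⟩ 1) (1:ℚ)
          = -((mkSys C o hcard hgood).gen i) := by
        rw [BinRW.Sys.gen]
        show _ = -(monomial (Uc C o i) 1 - monomial (Vc C o i) 1)
        rw [hU, hV]
        rw [neg_sub]
        rfl
      rw [this]
      exact neg_mem (Ideal.subset_span ⟨i, rfl⟩)
  · rw [BinRW.Sys.idl, Ideal.span_le]
    rintro f ⟨i, rfl⟩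
    have hmem : (X (⟨i.1, mem_verts i.2 (corner_mem00 i.1)⟩ : {v // v ∈ verts C}) *
          X ⟨i.1 + (1, 1), mem_verts i.2 (corner_mem11 i.1)⟩ -
        X ⟨i.1 + (0, 1), mem_verts i.2 (corner_mem01 i.1)⟩ *
          X ⟨i.1 + (1, 0), mem_verts i.2 (corner_mem10 i.1)⟩ : MvPolynomial {v // v ∈ verts C} ℚ)
        ∈ adjIdeal ℚ C :=
      Ideal.subset_span ⟨i.1, i.2, rfl⟩
    rw [X_mul_X, X_mul_X] at hmem
    by_cases h : o i.1
    · have : (mkSys C o hcard hgood).gen i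
          = monomial (Finsupp.single (vert00 C i) 1 + Finsupp.single (vert11 C i) 1) (1:ℚ)
          - monomial (Finsupp.single (vert01 C i) 1 + Finsupp.single (vert10 C i) 1) (1:ℚ) := by
        rw [BinRW.Sys.gen]
        show monomial (Uc C o i) 1 - monomial (Vc C o i) 1 = _
        rw [Uc, Vc, P1, P2, Q1, Q2, if_pos h, if_pos h, if_pos h, if_pos h]
      rw [this]
      exact hmem
    · have : (mkSys C o hcard hgood).gen i
          = -(monomial (Finsupp.single (vert00 C i) 1 + Finsupp.single (vert11 C i) 1) (1:ℚ)
          - monomial (Finsupp.single (vert01 C i) 1 + Finsupp.single (vert10 C i) 1) (1:ℚ)) := by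
        rw [BinRW.Sys.gen]
        show monomial (Uc C o i) 1 - monomial (Vc C o i) 1 = _
        rw [Uc, Vc, P1, P2, Q1, Q2, if_neg h, if_neg h, if_neg h, if_neg h, neg_sub]
      rw [this]
      exact neg_mem hmem

end
end CellInst


/-- For a weakly connected collection of cells of rank at most 3,
`I_adj(𝒞)` over `ℚ` is radical. -/
theorem stmt_17 (C : Finset (ℤ × ℤ)) (hC : C.Nonempty) (hwc : WeaklyConnected C)
    (hcard : C.card ≤ 3) :
    (adjIdeal ℚ C).radical = adjIdeal ℚ C := by
  obtain ⟨o, hgood⟩ := exists_goodOri C hcard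
  letI := CellInst.vLO C
  rw [CellInst.adj_eq_idl C o hcard hgood]
  exact (CellInst.mkSys C o hcard hgood).radical_idl
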